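/- Let a, b : Primes → ℝ be functions on the prime numbers with |a_p| ≤ 2 and |b_p| ≤ 2 for every prime p. Suppose that, as s → 1⁺, Σ_p a_p p^{−s} = O(1), Σ_p b_p p^{−s} = O(1), Σ_p (a_p² − 1) p^{−s} = O(1), Σ_p (b_p² − 1) p^{−s} = O(1), and Σ_p a_p b_p p^{−s} = O(1). Then limsup_{s→1⁺} (Σ_{p : a_p = b_p} p^{−s}) / (Σ_p p^{−s}) ≤ 7/8; that is, the set of primes where a_p = b_p has analytic density at most 7/8. -/

import Mathlib

open Filter Topology Asymptotics

private lemma pr_summable {s : ℝ} (hs : 1 < s) :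
    Summable (fun p : Nat.Primes => ((p : ℕ) : ℝ) ^ (-s)) := by
  have := Nat.Primes.summable_rpow (r := -s) |>.mpr (by linarith)
  exact this

private lemma pr_nonneg (s : ℝ) (p : Nat.Primes) : 0 ≤ ((p : ℕ) : ℝ) ^ (-s) :=
  Real.rpow_nonneg (by positivity) _

private lemma wt_summable {s : ℝ} (hs : 1 < s) (c : Nat.Primes → ℝ) {C : ℝ}
    (hc : ∀ p, |c p| ≤ C) :
    Summable (fun p : Nat.Primes => c p * ((p : ℕ) : ℝ) ^ (-s)) := by
  refine Summable.of_norm_bounded ((pr_summable hs).mul_left C) ?_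
  intro p
  rw [norm_mul, Real.norm_eq_abs, Real.norm_eq_abs, abs_of_nonneg (pr_nonneg s p)]
  exact mul_le_mul_of_nonneg_right (hc p) (pr_nonneg s p)

/-- The prime zeta sum tends to infinity as `s → 1⁺`. -/
private lemma tendsto_primeZeta :
    Tendsto (fun s : ℝ => ∑' p : Nat.Primes, ((p : ℕ) : ℝ) ^ (-s)) (𝓝[>] 1) atTop := by
  rw [tendsto_atTop]
  intro M
  obtain ⟨F, hF⟩ : ∃ F : Finset Nat.Primes, M + 1 ≤ ∑ p ∈ F, (1 / (p : ℝ)) := by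
    by_contra h
    push_neg at h
    exact Nat.Primes.not_summable_one_div
      (summable_of_sum_le (fun p => by positivity) fun F => (h F).le)
  have hcont : Continuous (fun s : ℝ => ∑ p ∈ F, ((p : ℕ) : ℝ) ^ (-s)) := by
    refine continuous_finset_sum _ fun p _ => ?_
    have hp : (0 : ℝ) < ((p : ℕ) : ℝ) := by
      have := p.2.two_le; positivity
    have : (fun s : ℝ => ((p : ℕ) : ℝ) ^ (-s)) =
        fun s => Real.exp (Real.log ((p : ℕ) : ℝ) * (-s)) := by
      funext s; rw [Real.rpow_def_of_pos hp]
    rw [this]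
    exact Real.continuous_exp.comp (by continuity)
  have hlim : Tendsto (fun s : ℝ => ∑ p ∈ F, ((p : ℕ) : ℝ) ^ (-s)) (𝓝[>] 1)
      (𝓝 (∑ p ∈ F, ((p : ℕ) : ℝ) ^ (-(1 : ℝ)))) :=
    (hcont.tendsto 1).mono_left nhdsWithin_le_nhds
  have hval : (∑ p ∈ F, ((p : ℕ) : ℝ) ^ (-(1 : ℝ))) = ∑ p ∈ F, (1 / (p : ℝ)) := by
    refine Finset.sum_congr rfl fun p _ => ?_
    rw [Real.rpow_neg_one, one_div]
  have hgt : ∀ᶠ s in 𝓝[>] (1 : ℝ), M < ∑ p ∈ F, ((p : ℕ) : ℝ) ^ (-s) := by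
    refine hlim.eventually (eventually_gt_nhds ?_)
    rw [hval]; linarith
  filter_upwards [hgt, self_mem_nhdsWithin] with s hs hs1
  have hsum := pr_summable (Set.mem_Ioi.mp hs1)
  exact le_trans hs.le (Summable.sum_le_tsum F (fun p _ => pr_nonneg s p) hsum)

/-- Remark after Theorem 1 of the paper: If `|a p| ≤ 2`, `|b p| ≤ 2`
for all primes `p`, and as `s → 1⁺` the sums `Σ_p a_p p^{-s}`, `Σ_p b_p p^{-s}`,
`Σ_p (a_p² - 1) p^{-s}`, `Σ_p (b_p² - 1) p^{-s}` and `Σ_p a_p b_p p^{-s}` are all `O(1)`,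
then the set `{p : a_p = b_p}` has analytic density at most `7/8`. -/
theorem statement6 (a b : Nat.Primes → ℝ)
    (ha : ∀ p : Nat.Primes, |a p| ≤ 2) (hb : ∀ p : Nat.Primes, |b p| ≤ 2)
    (h1 : (fun s : ℝ => ∑' p : Nat.Primes, a p * ((p : ℕ) : ℝ) ^ (-s))
      =O[𝓝[>] (1 : ℝ)] (fun _ => (1 : ℝ)))
    (h2 : (fun s : ℝ => ∑' p : Nat.Primes, b p * ((p : ℕ) : ℝ) ^ (-s))
      =O[𝓝[>] (1 : ℝ)] (fun _ => (1 : ℝ)))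
    (h3 : (fun s : ℝ => ∑' p : Nat.Primes, (a p ^ 2 - 1) * ((p : ℕ) : ℝ) ^ (-s))
      =O[𝓝[>] (1 : ℝ)] (fun _ => (1 : ℝ)))
    (h4 : (fun s : ℝ => ∑' p : Nat.Primes, (b p ^ 2 - 1) * ((p : ℕ) : ℝ) ^ (-s))
      =O[𝓝[>] (1 : ℝ)] (fun _ => (1 : ℝ)))
    (h5 : (fun s : ℝ => ∑' p : Nat.Primes, a p * b p * ((p : ℕ) : ℝ) ^ (-s))
      =O[𝓝[>] (1 : ℝ)] (fun _ => (1 : ℝ))) :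
    limsup (fun s : ℝ =>
      (∑' p : {p : Nat.Primes // a p = b p}, ((p.1 : ℕ) : ℝ) ^ (-s)) /
        ∑' p : Nat.Primes, ((p : ℕ) : ℝ) ^ (-s)) (𝓝[>] (1 : ℝ)) ≤ 7 / 8 := by
  set S : ℝ → ℝ := fun s => ∑' p : Nat.Primes, ((p : ℕ) : ℝ) ^ (-s) with hS_def
  set T : ℝ → ℝ := fun s => ∑' p : {p : Nat.Primes // a p = b p}, ((p.1 : ℕ) : ℝ) ^ (-s)
    with hT_def
  -- extract O(1) constants
  obtain ⟨c3, hc3⟩ := h3.bound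
  obtain ⟨c4, hc4⟩ := h4.bound
  obtain ⟨c5, hc5⟩ := h5.bound
  simp only [norm_one, mul_one, Real.norm_eq_abs] at hc3 hc4 hc5
  set K : ℝ := |c3| + |c4| + 2 * |c5| + 1 with hK_def
  have hK_pos : 0 < K := by positivity
  -- the key eventual inequality : 16 * T s ≤ 14 * S s + K
  have key : ∀ᶠ s in 𝓝[>] (1 : ℝ), 16 * T s ≤ 14 * S s + K := by
    filter_upwards [hc3, hc4, hc5, self_mem_nhdsWithin] with s h3' h4' h5' hs1
    have hs : (1 : ℝ) < s := hs1
    have hsum := pr_summable hs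
    have hA : Summable (fun p : Nat.Primes => (a p ^ 2 - 1) * ((p : ℕ) : ℝ) ^ (-s)) :=
      wt_summable hs _ (C := 5) fun p => by
        have := abs_le.mp (ha p); rw [abs_le]; constructor <;> nlinarith
    have hB : Summable (fun p : Nat.Primes => (b p ^ 2 - 1) * ((p : ℕ) : ℝ) ^ (-s)) :=
      wt_summable hs _ (C := 5) fun p => by
        have := abs_le.mp (hb p); rw [abs_le]; constructor <;> nlinarith
    have hC : Summable (fun p : Nat.Primes => a p * b p * ((p : ℕ) : ℝ) ^ (-s)) :=
      wt_summable hs _ (C := 4) fun p => by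
        have h1 := abs_le.mp (ha p); have h2 := abs_le.mp (hb p)
        rw [abs_le]; constructor <;> nlinarith
    have hG : Summable (fun p : Nat.Primes => (a p - b p) ^ 2 * ((p : ℕ) : ℝ) ^ (-s)) :=
      wt_summable hs _ (C := 16) fun p => by
        have h1 := abs_le.mp (ha p); have h2 := abs_le.mp (hb p)
        rw [abs_le]; constructor <;> nlinarith
    -- identity : Σ (a-b)² pr = A + B - 2C + 2S
    have hid : (∑' p : Nat.Primes, (a p - b p) ^ 2 * ((p : ℕ) : ℝ) ^ (-s)) =
        (∑' p : Nat.Primes, (a p ^ 2 - 1) * ((p : ℕ) : ℝ) ^ (-s)) +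
        (∑' p : Nat.Primes, (b p ^ 2 - 1) * ((p : ℕ) : ℝ) ^ (-s)) -
        2 * (∑' p : Nat.Primes, a p * b p * ((p : ℕ) : ℝ) ^ (-s)) + 2 * S s := by
      have hpt : ∀ p : Nat.Primes, (a p - b p) ^ 2 * ((p : ℕ) : ℝ) ^ (-s) =
          ((a p ^ 2 - 1) * ((p : ℕ) : ℝ) ^ (-s) + (b p ^ 2 - 1) * ((p : ℕ) : ℝ) ^ (-s)) +
          ((2 : ℝ) * ((p : ℕ) : ℝ) ^ (-s) - 2 * (a p * b p * ((p : ℕ) : ℝ) ^ (-s))) :=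
        fun p => by ring
      rw [tsum_congr hpt, Summable.tsum_add (hA.add hB) ((hsum.mul_left 2).sub (hC.mul_left 2)),
        Summable.tsum_add hA hB, Summable.tsum_sub (hsum.mul_left 2) (hC.mul_left 2),
        tsum_mul_left, tsum_mul_left]
      ring
    -- splitting : Σ (a-b)² pr ≤ 16 (S s - T s)
    have hsplit : (∑' p : Nat.Primes, (a p - b p) ^ 2 * ((p : ℕ) : ℝ) ^ (-s)) ≤
        16 * (S s - T s) := by
      set E : Set Nat.Primes := {p | a p = b p} with hE_def
      have hTS : T s + (∑' p : ↥Eᶜ, ((p.1 : ℕ) : ℝ) ^ (-s)) = S s :=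
        Summable.tsum_add_tsum_compl (s := E) (hsum.subtype E) (hsum.subtype Eᶜ)
      have hzero : (∑' p : ↥E, (a p.1 - b p.1) ^ 2 * ((p.1 : ℕ) : ℝ) ^ (-s)) = 0 := by
        calc (∑' p : ↥E, (a p.1 - b p.1) ^ 2 * ((p.1 : ℕ) : ℝ) ^ (-s))
            = ∑' _ : ↥E, (0 : ℝ) := by
              refine tsum_congr fun p => ?_
              have hp : a p.1 = b p.1 := p.2
              rw [hp]; ring
          _ = 0 := tsum_zero
      have hsplit0 : (∑' p : Nat.Primes, (a p - b p) ^ 2 * ((p : ℕ) : ℝ) ^ (-s)) =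
          (∑' p : ↥E, (a p.1 - b p.1) ^ 2 * ((p.1 : ℕ) : ℝ) ^ (-s)) +
          (∑' p : ↥Eᶜ, (a p.1 - b p.1) ^ 2 * ((p.1 : ℕ) : ℝ) ^ (-s)) :=
        (Summable.tsum_add_tsum_compl (s := E) (hG.subtype E) (hG.subtype Eᶜ)).symm
      have hbound : (∑' p : ↥Eᶜ, (a p.1 - b p.1) ^ 2 * ((p.1 : ℕ) : ℝ) ^ (-s)) ≤
          16 * (∑' p : ↥Eᶜ, ((p.1 : ℕ) : ℝ) ^ (-s)) := by
        rw [← tsum_mul_left]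
        refine Summable.tsum_le_tsum (fun p => ?_) (hG.subtype Eᶜ) ((hsum.subtype Eᶜ).mul_left 16)
        refine mul_le_mul_of_nonneg_right ?_ (pr_nonneg s p.1)
        have h1 := abs_le.mp (ha p.1); have h2 := abs_le.mp (hb p.1)
        nlinarith
      rw [hsplit0, hzero, zero_add]
      calc (∑' p : ↥Eᶜ, (a p.1 - b p.1) ^ 2 * ((p.1 : ℕ) : ℝ) ^ (-s))
          ≤ 16 * (∑' p : ↥Eᶜ, ((p.1 : ℕ) : ℝ) ^ (-s)) := hbound
        _ = 16 * (S s - T s) := by rw [← hTS]; ring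
    -- combine
    have habs : -(|c3| + |c4| + 2 * |c5|) ≤
        (∑' p : Nat.Primes, (a p ^ 2 - 1) * ((p : ℕ) : ℝ) ^ (-s)) +
        (∑' p : Nat.Primes, (b p ^ 2 - 1) * ((p : ℕ) : ℝ) ^ (-s)) -
        2 * (∑' p : Nat.Primes, a p * b p * ((p : ℕ) : ℝ) ^ (-s)) := by
      have e3 := abs_le.mp (h3'.trans (le_abs_self c3))
      have e4 := abs_le.mp (h4'.trans (le_abs_self c4))
      have e5 := abs_le.mp (h5'.trans (le_abs_self c5))
      linarith [e3.1, e4.1, e5.2]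
    rw [hid] at hsplit
    rw [hK_def]
    linarith
  -- T is nonneg, S is eventually large
  have hT_nonneg : ∀ s : ℝ, 0 ≤ T s := fun s =>
    tsum_nonneg fun p => pr_nonneg s p.1
  refine le_of_forall_pos_le_add fun ε hε => ?_
  have hSbig : ∀ᶠ s in 𝓝[>] (1 : ℝ), max (K / ε) 1 ≤ S s :=
    tendsto_primeZeta.eventually_ge_atTop _
  have hev : ∀ᶠ s in 𝓝[>] (1 : ℝ), T s / S s ≤ 7 / 8 + ε := by
    filter_upwards [key, hSbig] with s hkey hSb
    have hS_pos : 0 < S s := lt_of_lt_of_le one_pos (le_trans (le_max_right _ _) hSb)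
    rw [div_le_iff₀ hS_pos]
    have hKε : K ≤ ε * S s := by
      have h1 : K / ε ≤ S s := le_trans (le_max_left _ _) hSb
      calc K = ε * (K / ε) := by field_simp
        _ ≤ ε * S s := by exact mul_le_mul_of_nonneg_left h1 hε.le
    nlinarith
  have hco : IsCoboundedUnder (· ≤ ·) (𝓝[>] (1 : ℝ)) (fun s => T s / S s) := by
    refine isCoboundedUnder_le_of_eventually_le _ (x := 0) ?_
    filter_upwards [hSbig] with s hSb
    have hS_pos : 0 < S s := lt_of_lt_of_le one_pos (le_trans (le_max_right _ _) hSb)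
    exact div_nonneg (hT_nonneg s) hS_pos.le
  exact limsup_le_of_le hco hev
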